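/- arXiv:2503.07665 — 2 statements merged into one kernel-verified Lean document; each statement's English description precedes it below -/
import Mathlib

section
/- Let G be a graph, 𝓑 a family of balls of G, and T a positive non-clashing teaching map for 𝓑. Let B = B_r(u) ∈ 𝓑 and suppose z₁, z₂, z₃ ∈ T(B) are three distinct vertices lying in pairwise disjoint, pairwise 'equivalent' sets in the following sense: for every vertex w of G with d(w, z_i) < d(w, z_j) for distinct i,j ∈ {1,2,3}, w lies in the connected component (of G minus a fixed separator) containing z_i, and these three components are pairwise disjoint. If u is not in the component containing z₃, then T' obtained from T by removing z₃ from T(B) (and unchanged otherwise) is still a positive non-clashing teaching map for 𝓑. -/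
open Classical in
/-- The ball of radius `r` around `v`: vertices reachable by a walk of length at most `r`. -/
def graphBall {V : Type*} (G : SimpleGraph V) (v : V) (r : ℕ) : Set V :=
  {w | ∃ p : G.Walk v w, p.length ≤ r}

/-- `T` is a positive teaching map for the family of balls `𝓑`. -/
def IsPositiveMap {V : Type*} (𝓑 : Set (Set V)) (T : Set V → Set V) : Prop :=
  ∀ B ∈ 𝓑, T B ⊆ B

/-- `T` is non-clashing for `𝓑`. -/
def IsNonClashing {V : Type*} (𝓑 : Set (Set V)) (T : Set V → Set V) : Prop :=
  ∀ B₁ ∈ 𝓑, ∀ B₂ ∈ 𝓑, B₁ ≠ B₂ → ∃ w ∈ T B₁ ∪ T B₂, w ∉ B₁ ∩ B₂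

open scoped Classical in
/-- Removing one of three equivalent vertices from a teaching set keeps the map
positive and non-clashing, provided the center is outside the third component. -/
theorem stmt_4 {V : Type*} (G : SimpleGraph V) (𝓑 : Set (Set V))
    (h𝓑 : ∀ B ∈ 𝓑, ∃ (v : V) (r : ℕ), B = graphBall G v r)
    (T : Set V → Set V) (hpos : IsPositiveMap 𝓑 T) (hnc : IsNonClashing 𝓑 T)
    (u : V) (r : ℕ) (B : Set V) (hB : B = graphBall G u r) (hB𝓑 : B ∈ 𝓑)
    (z₁ z₂ z₃ : V) (hz₁ : z₁ ∈ T B) (hz₂ : z₂ ∈ T B) (hz₃ : z₃ ∈ T B)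
    (h12 : z₁ ≠ z₂) (h13 : z₁ ≠ z₃) (h23 : z₂ ≠ z₃)
    (C₁ C₂ C₃ : Set V) (hzC₁ : z₁ ∈ C₁) (hzC₂ : z₂ ∈ C₂) (hzC₃ : z₃ ∈ C₃)
    (hd12 : Disjoint C₁ C₂) (hd13 : Disjoint C₁ C₃) (hd23 : Disjoint C₂ C₃)
    (hkey : ∀ (w : V) (i j : Fin 3), i ≠ j →
      G.dist w (![z₁, z₂, z₃] i) < G.dist w (![z₁, z₂, z₃] j) →
      w ∈ ![C₁, C₂, C₃] i)
    (hu : u ∉ C₃) :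
    IsPositiveMap 𝓑 (fun B' => if B' = B then T B \ {z₃} else T B') ∧
    IsNonClashing 𝓑 (fun B' => if B' = B then T B \ {z₃} else T B') := by

  -- key auxiliary fact
  have key : ∀ B' ∈ 𝓑, z₃ ∉ B' → ∃ w ∈ T B \ {z₃}, w ∉ B ∩ B' := by
    intro B' hB' hz3B'
    by_cases h1 : z₁ ∉ B'
    · exact ⟨z₁, ⟨hz₁, h13⟩, fun h => h1 h.2⟩
    by_cases h2 : z₂ ∉ B'
    · exact ⟨z₂, ⟨hz₂, h23⟩, fun h => h2 h.2⟩
    push_neg at h1 h2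
    exfalso
    obtain ⟨v, r', hB'eq⟩ := h𝓑 B' hB'
    rw [hB'eq] at h1 h2 hz3B'
    obtain ⟨p₁, hp₁⟩ := h1
    obtain ⟨p₂, hp₂⟩ := h2
    have hz1B : z₁ ∈ graphBall G u r := hB ▸ hpos B hB𝓑 hz₁
    have hz3B : z₃ ∈ graphBall G u r := hB ▸ hpos B hB𝓑 hz₃
    obtain ⟨q₁, _⟩ := hz1B
    obtain ⟨q₃, _⟩ := hz3B
    have ra : G.Reachable v z₁ := ⟨p₁⟩
    have rb : G.Reachable u z₁ := ⟨q₁⟩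
    have rc : G.Reachable u z₃ := ⟨q₃⟩
    have hreach : G.Reachable v z₃ := ra.trans (rb.symm.trans rc)
    have hd3 : r' < G.dist v z₃ := by
      by_contra h
      push_neg at h
      obtain ⟨p, hp⟩ := hreach.exists_walk_length_eq_dist
      exact hz3B' ⟨p, hp ▸ h⟩
    have hc1 : v ∈ C₁ := by
      have := hkey v 0 2 (by decide)
      simp only [Matrix.cons_val_zero, Matrix.cons_val_two, Matrix.tail_cons,
        Matrix.head_cons] at this
      exact this (lt_of_le_of_lt (le_trans (G.dist_le p₁) hp₁) hd3)
    have hc2 : v ∈ C₂ := by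
      have := hkey v 1 2 (by decide)
      simp only [Matrix.cons_val_one, Matrix.cons_val_two, Matrix.tail_cons,
        Matrix.head_cons] at this
      exact this (lt_of_le_of_lt (le_trans (G.dist_le p₂) hp₂) hd3)
    exact Set.disjoint_left.mp hd12 hc1 hc2
  constructor
  · intro B' hB' w hw
    by_cases h : B' = B
    · simp only [h, if_pos rfl] at hw
      exact h ▸ hpos B hB𝓑 hw.1
    · simp only [if_neg h] at hw
      exact hpos B' hB' hw
  · intro B₁ hB₁ B₂ hB₂ hne
    obtain ⟨w, hw, hwn⟩ := hnc B₁ hB₁ B₂ hB₂ hne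
    by_cases e₁ : B₁ = B
    · have e₂ : ¬ B₂ = B := fun h => hne (e₁.trans h.symm)
      simp only [if_pos e₁, if_neg e₂]
      by_cases ew : w = z₃
      · by_cases h3 : z₃ ∈ T B₂
        · exact ⟨z₃, Or.inr h3, ew ▸ hwn⟩
        · have hz3nB₂ : z₃ ∉ B₂ := fun h => (ew ▸ hwn) ⟨e₁ ▸ hpos B hB𝓑 hz₃, h⟩
          obtain ⟨w', hw', hw'n⟩ := key B₂ hB₂ hz3nB₂
          exact ⟨w', Or.inl hw', e₁ ▸ hw'n⟩
      · refine ⟨w, ?_, hwn⟩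
        rcases hw with h | h
        · exact Or.inl ⟨e₁ ▸ h, ew⟩
        · exact Or.inr h
    · by_cases e₂ : B₂ = B
      · simp only [if_neg e₁, if_pos e₂]
        by_cases ew : w = z₃
        · by_cases h3 : z₃ ∈ T B₁
          · exact ⟨z₃, Or.inl h3, ew ▸ hwn⟩
          · have hz3nB₁ : z₃ ∉ B₁ := fun h => (ew ▸ hwn) ⟨h, e₂ ▸ hpos B hB𝓑 hz₃⟩
            obtain ⟨w', hw', hw'n⟩ := key B₁ hB₁ hz3nB₁
            refine ⟨w', Or.inr hw', fun h => hw'n ⟨e₂ ▸ h.2, h.1⟩⟩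
        · refine ⟨w, ?_, hwn⟩
          rcases hw with h | h
          · exact Or.inl h
          · exact Or.inr ⟨e₂ ▸ h, ew⟩
      · simp only [if_neg e₁, if_neg e₂]
        exact ⟨w, hw, hwn⟩
end

section
/- Let G be a graph, G' an induced subgraph of G, X ⊆ V(G') a vertex set, and suppose that for every connected component H of G − X, either V(H) ⊆ V(G'), or V(H) ∩ V(G') = ∅ and there exists a component H' of G − X with V(H') ⊆ V(G') and an isomorphism α from H to H' preserving adjacency to X. Then for all u, v ∈ V(G'), the distance between u and v in G' equals their distance in G. -/
/-- The support of a connected component of `G − X`, as a set of vertices of `G`. -/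
def compSupp {V : Type*} (G : SimpleGraph V) (X : Set V)
    (c : (G.induce (Xᶜ : Set V)).ConnectedComponent) : Set V :=
  Subtype.val '' c.supp

/-- If every component of `G − X` is either inside `G'` (induced on `S ⊇ X`), or
disjoint from `S` with an isomorphic copy inside `S` (via an isomorphism preserving
adjacency to `X`), then distances in `G'` agree with distances in `G`. -/
theorem stmt_9 {V : Type*} [Fintype V] (G : SimpleGraph V) (hG : G.Connected)
    (S X : Set V) (hXS : X ⊆ S)
    (hcomp : ∀ c : (G.induce (Xᶜ : Set V)).ConnectedComponent,
      compSupp G X c ⊆ S ∨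
      (compSupp G X c ∩ S = ∅ ∧
        ∃ c' : (G.induce (Xᶜ : Set V)).ConnectedComponent,
          compSupp G X c' ⊆ S ∧
          ∃ α : (compSupp G X c) ≃ (compSupp G X c'),
            (∀ u v : compSupp G X c, G.Adj u v ↔ G.Adj (α u) (α v)) ∧
            (∀ (u : compSupp G X c) (x : V), x ∈ X → (G.Adj u x ↔ G.Adj (α u) x)))) :
    ∀ u v : S, (G.induce S).dist u v = G.dist u v := by
  classical
  set GX := G.induce (Xᶜ : Set V) with hGX
  -- uniform choice of the replacement component and isomorphism
  have hchoice : ∀ c : GX.ConnectedComponent,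
      ∃ c' : GX.ConnectedComponent,
        ∃ α : (compSupp G X c) ≃ (compSupp G X c'),
          compSupp G X c' ⊆ S ∧
          (∀ u v : compSupp G X c, G.Adj u v ↔ G.Adj (α u) (α v)) ∧
          (∀ (u : compSupp G X c) (x : V), x ∈ X → (G.Adj u x ↔ G.Adj (α u) x)) := by
    intro c
    rcases hcomp c with h | ⟨_, c', hc', α, h1, h2⟩
    · exact ⟨c, Equiv.refl _, h, fun u v => Iff.rfl, fun u x _ => Iff.rfl⟩
    · exact ⟨c', α, hc', h1, h2⟩
  choose F A hFS hA1 hA2 using hchoice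
  -- basic membership facts
  have hmem : ∀ (b : V) (hb : b ∉ X),
      b ∈ compSupp G X (GX.connectedComponentMk ⟨b, hb⟩) := by
    intro b hb
    exact ⟨⟨b, hb⟩, (SimpleGraph.ConnectedComponent.mem_supp_iff _ _).mpr rfl, rfl⟩
  have hmem' : ∀ (c : GX.ConnectedComponent) (b : V) (hb : b ∉ X),
      GX.connectedComponentMk ⟨b, hb⟩ = c → b ∈ compSupp G X c := by
    intro c b hb h
    exact ⟨⟨b, hb⟩, (SimpleGraph.ConnectedComponent.mem_supp_iff _ _).mpr h, rfl⟩
  -- transport across equal components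
  have hAcast : ∀ (c d : GX.ConnectedComponent) (h : c = d) (b : V)
      (hb : b ∈ compSupp G X c) (hb' : b ∈ compSupp G X d),
      (↑(A c ⟨b, hb⟩) : V) = (↑(A d ⟨b, hb'⟩) : V) := by
    rintro c d rfl b hb hb'
    rfl
  -- the main double statement, by strong induction on walk length
  have key : ∀ n : ℕ,
      (∀ (u v : V) (p : G.Walk u v), p.length ≤ n → u ∈ S → v ∈ S →
        ∃ q : G.Walk u v, q.length ≤ p.length ∧ ∀ a ∈ q.support, a ∈ S) ∧
      (∀ (w v : V) (p : G.Walk w v), p.length ≤ n → ∀ (hw : w ∉ X), w ∉ S → v ∈ S →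
        ∃ r : G.Walk (↑(A (GX.connectedComponentMk ⟨w, hw⟩) ⟨w, hmem w hw⟩) : V) v,
          r.length ≤ p.length ∧ ∀ a ∈ r.support, a ∈ S) := by
    intro n
    induction n using Nat.strong_induction_on with
    | _ n IH =>
      constructor
      · -- part A
        intro u v p hlen hu hv
        cases p with
        | nil =>
          exact ⟨SimpleGraph.Walk.nil, le_rfl, by
            intro a ha
            simp only [SimpleGraph.Walk.support_nil, List.mem_singleton] at ha
            exact ha ▸ hu⟩
        | @cons _ b _ hadj p' =>
          have hlt : p'.length < n := by
            simpa [SimpleGraph.Walk.length_cons] using Nat.lt_of_lt_of_le (Nat.lt_succ_self _) hlen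
          by_cases hb : b ∈ S
          · obtain ⟨q, hq1, hq2⟩ := (IH p'.length hlt).1 b v p' le_rfl hb hv
            refine ⟨SimpleGraph.Walk.cons hadj q, ?_, ?_⟩
            · simpa [SimpleGraph.Walk.length_cons] using Nat.succ_le_succ hq1
            · intro a ha
              rw [SimpleGraph.Walk.support_cons, List.mem_cons] at ha
              rcases ha with ha | ha
              · exact ha ▸ hu
              · exact hq2 a ha
          · have hbX : b ∉ X := fun h => hb (hXS h)
            -- u must be in X
            have huX : u ∈ X := by
              by_contra huX
              rcases hcomp (GX.connectedComponentMk ⟨b, hbX⟩) with h | ⟨hdisj, _⟩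
              · exact hb (h (hmem b hbX))
              · have hub : GX.connectedComponentMk ⟨u, huX⟩
                    = GX.connectedComponentMk ⟨b, hbX⟩ := by
                  refine SimpleGraph.ConnectedComponent.sound ?_
                  exact SimpleGraph.Adj.reachable (by exact hadj)
                have : u ∈ compSupp G X (GX.connectedComponentMk ⟨b, hbX⟩) ∩ S :=
                  ⟨hmem' _ u huX hub, hu⟩
                rw [hdisj] at this
                exact this
            obtain ⟨r, hr1, hr2⟩ := (IH p'.length hlt).2 b v p' le_rfl hbX hb hv
            have hedge : G.Adj u
                (↑(A (GX.connectedComponentMk ⟨b, hbX⟩) ⟨b, hmem b hbX⟩) : V) := by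
              have := (hA2 (GX.connectedComponentMk ⟨b, hbX⟩) ⟨b, hmem b hbX⟩ u huX).mp
                hadj.symm
              exact this.symm
            refine ⟨SimpleGraph.Walk.cons hedge r, ?_, ?_⟩
            · simpa [SimpleGraph.Walk.length_cons] using Nat.succ_le_succ hr1
            · intro a ha
              rw [SimpleGraph.Walk.support_cons, List.mem_cons] at ha
              rcases ha with ha | ha
              · exact ha ▸ hu
              · exact hr2 a ha
      · -- part B
        intro w v p hlen hw hwS hv
        cases p with
        | nil => exact absurd hv hwS
        | @cons _ b _ hadj p' =>
          have hlt : p'.length < n := by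
            simpa [SimpleGraph.Walk.length_cons] using Nat.lt_of_lt_of_le (Nat.lt_succ_self _) hlen
          set c := GX.connectedComponentMk ⟨w, hw⟩ with hc
          by_cases hbX : b ∈ X
          · -- next vertex is in X: switch back to part A
            obtain ⟨q, hq1, hq2⟩ := (IH p'.length hlt).1 b v p' le_rfl (hXS hbX) hv
            have hedge : G.Adj (↑(A c ⟨w, hmem w hw⟩) : V) b :=
              (hA2 c ⟨w, hmem w hw⟩ b hbX).mp hadj
            refine ⟨SimpleGraph.Walk.cons hedge q, ?_, ?_⟩
            · simpa [SimpleGraph.Walk.length_cons] using Nat.succ_le_succ hq1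
            · intro a ha
              rw [SimpleGraph.Walk.support_cons, List.mem_cons] at ha
              rcases ha with ha | ha
              · exact ha ▸ hFS c (A c ⟨w, hmem w hw⟩).2
              · exact hq2 a ha
          · -- next vertex stays in the same component
            have hcb : GX.connectedComponentMk ⟨b, hbX⟩ = c := by
              refine SimpleGraph.ConnectedComponent.sound ?_
              exact SimpleGraph.Adj.reachable (by exact hadj.symm)
            have hbc : b ∈ compSupp G X c := hmem' c b hbX hcb
            have hbS : b ∉ S := by
              rcases hcomp c with h | ⟨hdisj, _⟩
              · exact absurd (h (hmem' c w hw rfl)) hwS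
              · intro hbS
                have : b ∈ compSupp G X c ∩ S := ⟨hbc, hbS⟩
                rw [hdisj] at this
                exact this
            obtain ⟨r, hr1, hr2⟩ := (IH p'.length hlt).2 b v p' le_rfl hbX hbS hv
            have hcast : (↑(A (GX.connectedComponentMk ⟨b, hbX⟩) ⟨b, hmem b hbX⟩) : V)
                = (↑(A c ⟨b, hbc⟩) : V) := hAcast _ c hcb b _ _
            have hedge : G.Adj (↑(A c ⟨w, hmem w hw⟩) : V) (↑(A c ⟨b, hbc⟩) : V) :=
              (hA1 c ⟨w, hmem w hw⟩ ⟨b, hbc⟩).mp hadj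
            refine ⟨SimpleGraph.Walk.cons hedge (r.copy hcast rfl), ?_, ?_⟩
            · simpa [SimpleGraph.Walk.length_cons] using Nat.succ_le_succ hr1
            · intro a ha
              rw [SimpleGraph.Walk.support_cons, List.mem_cons] at ha
              rcases ha with ha | ha
              · exact ha ▸ hFS c (A c ⟨w, hmem w hw⟩).2
              · rw [SimpleGraph.Walk.support_copy] at ha
                exact hr2 a ha
  -- convert a walk with support in S to a walk in the induced graph
  have toInd : ∀ (u v : V) (p : G.Walk u v), (∀ a ∈ p.support, a ∈ S) →
      ∀ (hu : u ∈ S) (hv : v ∈ S),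
      ∃ q : (G.induce S).Walk ⟨u, hu⟩ ⟨v, hv⟩, q.length = p.length := by
    intro u v p
    induction p with
    | nil => exact fun _ hu hv => ⟨SimpleGraph.Walk.nil, rfl⟩
    | @cons a b w hadj p' ih =>
      intro hp hu hv
      have hb : b ∈ S := by
        refine hp b ?_
        rw [SimpleGraph.Walk.support_cons]
        exact List.mem_cons_of_mem _ p'.start_mem_support
      have hp' : ∀ x ∈ p'.support, x ∈ S := by
        intro x hx
        refine hp x ?_
        rw [SimpleGraph.Walk.support_cons]
        exact List.mem_cons_of_mem _ hx
      obtain ⟨q, hq⟩ := ih hp' hb hv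
      exact ⟨SimpleGraph.Walk.cons (by exact hadj : (G.induce S).Adj ⟨a, hu⟩ ⟨b, hb⟩) q,
        by exact congrArg (· + 1) hq⟩
  -- finish
  intro u v
  obtain ⟨p, hp⟩ := hG.exists_walk_length_eq_dist (u : V) (v : V)
  obtain ⟨q, hq1, hq2⟩ := (key p.length).1 u v p le_rfl u.2 v.2
  obtain ⟨q', hq'⟩ := toInd u v q hq2 u.2 v.2
  have hle1 : (G.induce S).dist u v ≤ G.dist (u : V) (v : V) := by
    calc (G.induce S).dist u v ≤ q'.length := SimpleGraph.dist_le q'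
      _ = q.length := hq'
      _ ≤ p.length := hq1
      _ = G.dist (u : V) (v : V) := hp
  have hle2 : G.dist (u : V) (v : V) ≤ (G.induce S).dist u v := by
    have hreach : (G.induce S).Reachable u v := ⟨q'⟩
    obtain ⟨q2, hq2len⟩ := hreach.exists_walk_length_eq_dist
    have hmap := SimpleGraph.dist_le
      (q2.map (⟨Subtype.val, fun h => h⟩ : SimpleGraph.Hom (G.induce S) G))
    rwa [SimpleGraph.Walk.length_map, hq2len] at hmap
  exact le_antisymm hle1 hle2
end
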